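/- Let p be an odd prime, G = GL₂(F_p), T' a non-split torus with normalizer N', and B₊ the upper triangular Borel. Then pr_{N'} + pr_{B₊} − pr_G is an idempotent in ℚ[G]; equivalently (since T'B₊ = G) pr_{N'}·pr_{B₊} = pr_G = pr_{B₊}·pr_{N'}. -/

import Mathlib

open Module Matrix

variable (p : ℕ) [Fact p.Prime]

/-- The Borel subgroup `B₊` of upper triangular matrices in `GL₂(𝔽_p)`. -/
def Bplus : Subgroup (GL (Fin 2) (ZMod p)) where
  carrier := {g | (g : Matrix (Fin 2) (Fin 2) (ZMod p)) 1 0 = 0}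
  one_mem' := by simp [Matrix.one_apply]
  mul_mem' := by
    intro a b ha hb
    simp only [Set.mem_setOf_eq, Units.val_mul, Matrix.mul_apply, Fin.sum_univ_two] at *
    simp [ha, hb]
  inv_mem' := by
    intro a ha
    simp only [Set.mem_setOf_eq] at *
    rw [Matrix.coe_units_inv, Matrix.inv_def]
    simp [Matrix.adjugate_fin_two, ha]

/-- The Borel subgroup `B₋` of lower triangular matrices in `GL₂(𝔽_p)`. -/
def Bminus : Subgroup (GL (Fin 2) (ZMod p)) where
  carrier := {g | (g : Matrix (Fin 2) (Fin 2) (ZMod p)) 0 1 = 0}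
  one_mem' := by simp [Matrix.one_apply]
  mul_mem' := by
    intro a b ha hb
    simp only [Set.mem_setOf_eq, Units.val_mul, Matrix.mul_apply, Fin.sum_univ_two] at *
    simp [ha, hb]
  inv_mem' := by
    intro a ha
    simp only [Set.mem_setOf_eq] at *
    rw [Matrix.coe_units_inv, Matrix.inv_def]
    simp [Matrix.adjugate_fin_two, ha]

/-- The split maximal torus `T = B₊ ∩ B₋` of diagonal matrices in `GL₂(𝔽_p)`. -/
def Tsplit : Subgroup (GL (Fin 2) (ZMod p)) := Bplus p ⊓ Bminus p

/-- The embedding `𝔽_{p²}^× → GL₂(𝔽_p)` given by a choice of an `𝔽_p`-basis `b`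
of `𝔽_{p²}` (each `z` acts by multiplication on `𝔽_{p²} ≅ 𝔽_p²`). -/
noncomputable def torusHom (b : Basis (Fin 2) (ZMod p) (GaloisField p 2)) :
    (GaloisField p 2)ˣ →* GL (Fin 2) (ZMod p) :=
  Units.map (((LinearMap.toMatrixAlgEquiv b).toAlgHom.comp
    (Algebra.lmul (ZMod p) (GaloisField p 2))).toRingHom.toMonoidHom)

/-- The non-split maximal torus `T' ≅ 𝔽_{p²}^×`. -/
noncomputable def Tnonsplit (b : Basis (Fin 2) (ZMod p) (GaloisField p 2)) :
    Subgroup (GL (Fin 2) (ZMod p)) := (torusHom p b).range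

/-- `pr_H = (1/|H|) ∑_{h ∈ H} h` in the rational group algebra `ℚ[G]`. -/
noncomputable def pr {G : Type*} [Group G] [Fintype G] (H : Subgroup G) :
    MonoidAlgebra ℚ G :=
  (Nat.card H : ℚ)⁻¹ • ∑ h ∈ (Set.toFinite (H : Set G)).toFinset, MonoidAlgebra.of ℚ G h


section PrAux


section PrLemmas

variable {G : Type*} [Group G] [Fintype G]

noncomputable def SS (H : Subgroup G) : MonoidAlgebra ℚ G :=
  ∑ h ∈ (Set.toFinite (H : Set G)).toFinset, MonoidAlgebra.of ℚ G h

lemma card_Hfinset (H : Subgroup G) :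
    ((Set.toFinite (H : Set G)).toFinset).card = Nat.card H := by
  rw [← Set.ncard_eq_toFinset_card (H : Set G), ← Nat.card_coe_set_eq]
  exact Nat.card_congr (Equiv.setCongr rfl)

lemma of_mul_SS (H : Subgroup G) {g : G} (hg : g ∈ H) :
    MonoidAlgebra.of ℚ G g * SS H = SS H := by
  unfold SS
  rw [Finset.mul_sum]
  refine Finset.sum_equiv (Equiv.mulLeft g) (fun h => ?_) (fun h _ => ?_)
  · simp only [Set.Finite.mem_toFinset, SetLike.mem_coe, Equiv.coe_mulLeft]
    exact (mul_mem_cancel_left hg).symm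
  · exact (_root_.map_mul (MonoidAlgebra.of ℚ G) g h).symm

lemma SS_mul_of (H : Subgroup G) {g : G} (hg : g ∈ H) :
    SS H * MonoidAlgebra.of ℚ G g = SS H := by
  unfold SS
  rw [Finset.sum_mul]
  refine Finset.sum_equiv (Equiv.mulRight g) (fun h => ?_) (fun h _ => ?_)
  · simp only [Set.Finite.mem_toFinset, SetLike.mem_coe, Equiv.coe_mulRight]
    exact (mul_mem_cancel_right hg).symm
  · exact (_root_.map_mul (MonoidAlgebra.of ℚ G) h g).symm

lemma SS_mul_SS (H : Subgroup G) : SS H * SS H = (Nat.card H : ℚ) • SS H := by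
  have h1 : SS H * SS H
      = ∑ h ∈ (Set.toFinite (H : Set G)).toFinset, MonoidAlgebra.of ℚ G h * SS H := by
    rw [SS, Finset.sum_mul]
  rw [h1, Finset.sum_congr rfl (fun h hh => of_mul_SS H (by
    simpa only [Set.Finite.mem_toFinset, SetLike.mem_coe] using hh)),
    Finset.sum_const, card_Hfinset]
  exact (Nat.cast_smul_eq_nsmul ℚ _ _).symm

end PrLemmas

section More
variable {G : Type*} [Group G] [Fintype G]
open MonoidAlgebra

lemma pr_eq_SS (H : Subgroup G) : pr H = (Nat.card H : ℚ)⁻¹ • SS H := rfl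

lemma SS_top : SS (⊤ : Subgroup G) = ∑ g : G, MonoidAlgebra.of ℚ G g := by
  unfold SS
  apply Finset.sum_congr _ (fun _ _ => rfl)
  ext g; simp

lemma pr_idem (H : Subgroup G) : pr H * pr H = pr H := by
  rw [pr_eq_SS, smul_mul_assoc, mul_smul_comm, SS_mul_SS, smul_smul, smul_smul]
  congr 1
  have : (Nat.card H : ℚ) ≠ 0 := by
    exact_mod_cast Nat.card_pos.ne'
  field_simp

set_option maxHeartbeats 1000000 in
lemma SS_mul_SS_of_surj (H K : Subgroup G)
    (hsurj : ∀ g : G, ∃ h ∈ H, ∃ k ∈ K, h * k = g) :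
    SS H * SS K
      = ((Nat.card H * Nat.card K : ℚ) / (Nat.card G : ℚ)) • SS (⊤ : Subgroup G) := by
  classical
  set HF := (Set.toFinite (H : Set G)).toFinset with hHF
  set KF := (Set.toFinite (K : Set G)).toFinset with hKF
  set c : G → ℕ := fun g => ((HF ×ˢ KF).filter (fun q => q.1 * q.2 = g)).card with hc
  have hmem : ∀ (g : G) (q : G × G),
      q ∈ (HF ×ˢ KF).filter (fun q => q.1 * q.2 = g) ↔
        q.1 ∈ H ∧ q.2 ∈ K ∧ q.1 * q.2 = g := by
    intro g q
    simp only [hHF, hKF, Finset.mem_filter, Finset.mem_product, Set.Finite.mem_toFinset,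
      SetLike.mem_coe, and_assoc]
  have hcc : ∀ g : G, c g = c 1 := by
    intro g
    obtain ⟨h0, hh0, k0, hk0, hg⟩ := hsurj g
    apply Finset.card_bij' (fun q _ => (h0⁻¹ * q.1, q.2 * k0⁻¹))
      (fun q _ => (h0 * q.1, q.2 * k0))
    · intro q hq
      obtain ⟨h1, h2, h3⟩ := (hmem g q).mp hq
      refine (hmem 1 _).mpr ⟨mul_mem (inv_mem hh0) h1, mul_mem h2 (inv_mem hk0), ?_⟩
      have e : h0⁻¹ * q.1 * (q.2 * k0⁻¹) = h0⁻¹ * (q.1 * q.2) * k0⁻¹ := by group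
      rw [e, h3, ← hg]
      group
    · intro q hq
      obtain ⟨h1, h2, h3⟩ := (hmem 1 q).mp hq
      refine (hmem g _).mpr ⟨mul_mem hh0 h1, mul_mem h2 hk0, ?_⟩
      have e : h0 * q.1 * (q.2 * k0) = h0 * (q.1 * q.2) * k0 := by group
      rw [e, h3, ← hg]
      group
    · intro q hq
      simp
    · intro q hq
      simp
  have expand : SS H * SS K = ∑ q ∈ HF ×ˢ KF, MonoidAlgebra.of ℚ G (q.1 * q.2) := by
    calc SS H * SS K
        = ∑ x ∈ HF, ∑ y ∈ KF, MonoidAlgebra.of ℚ G x * MonoidAlgebra.of ℚ G y :=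
          Finset.sum_mul_sum _ _ _ _
      _ = ∑ x ∈ HF, ∑ y ∈ KF, MonoidAlgebra.of ℚ G (x * y) := by simp_rw [_root_.map_mul]
      _ = ∑ q ∈ HF ×ˢ KF, MonoidAlgebra.of ℚ G (q.1 * q.2) :=
          (Finset.sum_product' (s := HF) (t := KF) (f := fun x y => MonoidAlgebra.of ℚ G (x * y))).symm
  have fib : SS H * SS K = ∑ g : G, (c g) • MonoidAlgebra.of ℚ G g := by
    rw [expand, ← Finset.sum_fiberwise_of_maps_to (fun q _ => Finset.mem_univ (q.1 * q.2))]
    refine Finset.sum_congr rfl fun g _ => ?_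
    rw [Finset.sum_congr rfl (fun q hq => by rw [((hmem g q).mp hq).2.2]),
      Finset.sum_const]
  have hcard : (c 1) * Fintype.card G = Nat.card H * Nat.card K := by
    have h0 := Finset.card_eq_sum_card_fiberwise
      (s := HF ×ˢ KF) (t := Finset.univ) (f := fun q => q.1 * q.2)
      (fun q _ => Finset.mem_univ _)
    rw [Finset.card_product, hHF, hKF, card_Hfinset, card_Hfinset] at h0
    rw [h0, Finset.sum_congr rfl (fun g _ => hcc g), Finset.sum_const, Finset.card_univ,
      smul_eq_mul, mul_comm]
  have hG : (Fintype.card G : ℚ) ≠ 0 := by exact_mod_cast Fintype.card_ne_zero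
  rw [fib, Finset.sum_congr rfl (fun g _ => by rw [hcc g]), ← Finset.smul_sum, ← SS_top]
  rw [← Nat.cast_smul_eq_nsmul ℚ]
  congr 1
  simp only [Nat.card_eq_fintype_card]
  rw [eq_div_iff hG]
  rw [← Nat.card_eq_fintype_card (α := ↥H), ← Nat.card_eq_fintype_card (α := ↥K)]
  exact_mod_cast hcard

lemma pr_mul_pr (H K : Subgroup G)
    (hsurj : ∀ g : G, ∃ h ∈ H, ∃ k ∈ K, h * k = g) :
    pr H * pr K = pr (⊤ : Subgroup G) := by
  rw [pr_eq_SS, pr_eq_SS, pr_eq_SS, smul_mul_assoc, mul_smul_comm,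
    SS_mul_SS_of_surj H K hsurj, smul_smul, smul_smul]
  congr 1
  have hH : (Nat.card H : ℚ) ≠ 0 := by exact_mod_cast Nat.card_pos.ne'
  have hK : (Nat.card K : ℚ) ≠ 0 := by exact_mod_cast Nat.card_pos.ne'
  have hG : (Nat.card G : ℚ) ≠ 0 := by exact_mod_cast Nat.card_pos.ne'
  have htop : Nat.card (⊤ : Subgroup G) = Nat.card G := by
    exact Nat.card_congr Subgroup.topEquiv.toEquiv
  rw [htop]
  field_simp

end More

set_option maxHeartbeats 1000000 in
lemma exists_decomp (p : ℕ) [Fact p.Prime] (b : Basis (Fin 2) (ZMod p) (GaloisField p 2))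
    (g : GL (Fin 2) (ZMod p)) :
    ∃ n ∈ Tnonsplit p b, n⁻¹ * g ∈ Bplus p := by
  set v : Fin 2 → ZMod p := fun i => (g : Matrix (Fin 2) (Fin 2) (ZMod p)) i 0 with hv
  set w : GaloisField p 2 := ∑ i, v i • b i with hw
  have hrepr : ∀ j, b.repr w j = v j := fun j => by rw [hw, b.repr_sum_self]
  have hdet : ((g : Matrix (Fin 2) (Fin 2) (ZMod p))).det ≠ 0 := by
    have h1 : IsUnit ((g : Matrix (Fin 2) (Fin 2) (ZMod p))).det :=
      ((Matrix.isUnit_iff_isUnit_det _).mp g.isUnit)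
    exact h1.ne_zero
  have hvne : v ≠ 0 := by
    intro h0
    apply hdet
    have h00 : (g : Matrix (Fin 2) (Fin 2) (ZMod p)) 0 0 = 0 := congrFun h0 0
    have h10 : (g : Matrix (Fin 2) (Fin 2) (ZMod p)) 1 0 = 0 := congrFun h0 1
    rw [Matrix.det_fin_two, h00, h10]
    ring
  have hwne : w ≠ 0 := by
    intro h
    apply hvne
    funext j
    have := hrepr j
    rw [h, map_zero] at this
    exact this.symm
  have hb0 : b 0 ≠ 0 := b.ne_zero 0
  set z : GaloisField p 2 := w / b 0 with hz
  have hzne : z ≠ 0 := div_ne_zero hwne hb0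
  set u : (GaloisField p 2)ˣ := Units.mk0 z hzne with hu
  refine ⟨torusHom p b u, ⟨u, rfl⟩, ?_⟩
  show ((((torusHom p b u)⁻¹ * g : GL (Fin 2) (ZMod p)) :
    Matrix (Fin 2) (Fin 2) (ZMod p))) 1 0 = 0
  rw [← _root_.map_inv]
  have hmat : (((torusHom p b u⁻¹) : GL (Fin 2) (ZMod p)) : Matrix (Fin 2) (Fin 2) (ZMod p))
      = LinearMap.toMatrix b b (Algebra.lmul (ZMod p) (GaloisField p 2) z⁻¹) := by
    rfl
  rw [Units.val_mul, hmat, Matrix.mul_apply]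
  have key : ∑ j, (LinearMap.toMatrix b b (Algebra.lmul (ZMod p) (GaloisField p 2) z⁻¹)) 1 j
        * (g : Matrix (Fin 2) (Fin 2) (ZMod p)) j 0
      = ((LinearMap.toMatrix b b (Algebra.lmul (ZMod p) (GaloisField p 2) z⁻¹)).mulVec
        (b.repr w)) 1 := by
    simp only [Matrix.mulVec, dotProduct]
    exact Finset.sum_congr rfl fun j _ => by rw [hrepr j]
  rw [key, LinearMap.toMatrix_mulVec_repr]
  have hzw : z⁻¹ * w = b 0 := by
    rw [hz, inv_div, div_mul_eq_mul_div, mul_comm, ← div_mul_eq_mul_div, div_self hwne, one_mul]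
  have happ : (Algebra.lmul (ZMod p) (GaloisField p 2) z⁻¹) w = b 0 := hzw
  rw [happ, Basis.repr_self]
  exact Finsupp.single_eq_of_ne (by decide)

end PrAux

/-- For `p` odd, `pr_{N'} + pr_{B₊} - pr_G` is an idempotent of `ℚ[GL₂(𝔽_p)]`;
equivalently (since `T'B₊ = G`) `pr_{N'}·pr_{B₊} = pr_G = pr_{B₊}·pr_{N'}`. -/
theorem stmt_14 (hp : Odd p) (b : Basis (Fin 2) (ZMod p) (GaloisField p 2)) :
    (pr (Subgroup.normalizer (Tnonsplit p b : Set (GL (Fin 2) (ZMod p)))) + pr (Bplus p) - pr (⊤ : Subgroup (GL (Fin 2) (ZMod p))))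
        * (pr (Subgroup.normalizer (Tnonsplit p b : Set (GL (Fin 2) (ZMod p)))) + pr (Bplus p) - pr ⊤)
      = pr (Subgroup.normalizer (Tnonsplit p b : Set (GL (Fin 2) (ZMod p)))) + pr (Bplus p) - pr ⊤ ∧
    pr (Subgroup.normalizer (Tnonsplit p b : Set (GL (Fin 2) (ZMod p)))) * pr (Bplus p) = pr (⊤ : Subgroup (GL (Fin 2) (ZMod p))) ∧
    pr (Bplus p) * pr (Subgroup.normalizer (Tnonsplit p b : Set (GL (Fin 2) (ZMod p)))) = pr (⊤ : Subgroup (GL (Fin 2) (ZMod p))) := by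
  have decompNB : ∀ g : GL (Fin 2) (ZMod p),
      ∃ h ∈ Subgroup.normalizer (Tnonsplit p b : Set (GL (Fin 2) (ZMod p))), ∃ k ∈ Bplus p, h * k = g := by
    intro g
    obtain ⟨n, hn, hk⟩ := exists_decomp p b g
    exact ⟨n, Subgroup.le_normalizer hn, n⁻¹ * g, hk, by group⟩
  have hNB : pr (Subgroup.normalizer (Tnonsplit p b : Set (GL (Fin 2) (ZMod p)))) * pr (Bplus p)
      = pr (⊤ : Subgroup (GL (Fin 2) (ZMod p))) :=
    pr_mul_pr _ _ decompNB
  have hBN : pr (Bplus p) * pr (Subgroup.normalizer (Tnonsplit p b : Set (GL (Fin 2) (ZMod p))))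
      = pr (⊤ : Subgroup (GL (Fin 2) (ZMod p))) := by
    apply pr_mul_pr
    intro g
    obtain ⟨n, hn, hk⟩ := exists_decomp p b g⁻¹
    refine ⟨(n⁻¹ * g⁻¹)⁻¹, inv_mem hk, n⁻¹,
      inv_mem (Subgroup.le_normalizer hn), ?_⟩
    group
  refine ⟨?_, hNB, hBN⟩
  set a := pr (Subgroup.normalizer (Tnonsplit p b : Set (GL (Fin 2) (ZMod p))))
  set b' := pr (Bplus p)
  set c := pr (⊤ : Subgroup (GL (Fin 2) (ZMod p)))
  have haa : a * a = a := pr_idem _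
  have hbb : b' * b' = b' := pr_idem _
  have hcc : c * c = c := pr_idem _
  have hac : a * c = c := pr_mul_pr _ _ fun g => ⟨1, one_mem _, g, Subgroup.mem_top g, one_mul g⟩
  have hca : c * a = c := pr_mul_pr _ _ fun g => ⟨g, Subgroup.mem_top g, 1, one_mem _, mul_one g⟩
  have hbc : b' * c = c := pr_mul_pr _ _ fun g => ⟨1, one_mem _, g, Subgroup.mem_top g, one_mul g⟩
  have hcb : c * b' = c := pr_mul_pr _ _ fun g => ⟨g, Subgroup.mem_top g, 1, one_mem _, mul_one g⟩
  calc (a + b' - c) * (a + b' - c)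
      = a * a + a * b' - a * c + (b' * a + b' * b' - b' * c)
        - (c * a + c * b' - c * c) := by noncomm_ring
    _ = a + b' - c := by
        rw [haa, hbb, hcc, hNB, hBN, hac, hca, hbc, hcb]
        abel
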